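/- Let (X_n)_{n≥1} be random variables with values in a complete separable metric space, converging almost surely to a random variable X. Let ν_n be the law of X_n and ν the law of X. Suppose there exist α > 0, positive random variables C and D with D ≤ 1 a.s., and a deterministic sequence r_n → 0 of positive radii, such that almost surely d(X_n, X) ≤ C·r_n and ν_n(B_{r_n}(X_n)) ≥ D·r_n^α for all n. Then the (upper Hausdorff) dimension of ν is at most α. -/

import Mathlib

open MeasureTheory Filter Metric Topology
open Set

private def badSet {E : Type*} [MetricSpace E] [MeasurableSpace E]
    (ν : Measure E) (α ε δ : ℝ) : Set E :=
  {x | ∀ q : ℚ, 0 < (q : ℝ) → (q : ℝ) ≤ δ →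
    ν (ball x (q : ℝ)) ≤ ENNReal.ofReal ((q : ℝ) ^ (α + ε))}

private lemma meas_ball_meas {E : Type*} [MetricSpace E]
    [MeasurableSpace E] [BorelSpace E] [SecondCountableTopology E]
    (μ : Measure E) [SFinite μ] (ρ : ℝ) :
    Measurable fun x => μ (ball x ρ) := by
  have hs : MeasurableSet {p : E × E | dist p.2 p.1 < ρ} :=
    measurableSet_lt (measurable_snd.dist measurable_fst) measurable_const
  have h := measurable_measure_prodMk_left (ν := μ) hs
  have heq : ∀ x : E, (Prod.mk x ⁻¹' {p : E × E | dist p.2 p.1 < ρ}) = ball x ρ := by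
    intro x; ext y; simp [mem_ball]
  simpa [heq] using h

private lemma badSet_measurable {E : Type*} [MetricSpace E]
    [MeasurableSpace E] [BorelSpace E] [SecondCountableTopology E]
    (ν : Measure E) [SFinite ν] (α ε δ : ℝ) :
    MeasurableSet (badSet ν α ε δ) := by
  have : badSet ν α ε δ = ⋂ q : ℚ,
      {x : E | 0 < (q : ℝ) → (q : ℝ) ≤ δ →
        ν (ball x (q : ℝ)) ≤ ENNReal.ofReal ((q : ℝ) ^ (α + ε))} := by
    ext x; simp [badSet]
  rw [this]
  refine MeasurableSet.iInter fun q => ?_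
  by_cases hq : 0 < (q : ℝ) ∧ (q : ℝ) ≤ δ
  · have heq : {x : E | 0 < (q : ℝ) → (q : ℝ) ≤ δ →
        ν (ball x (q : ℝ)) ≤ ENNReal.ofReal ((q : ℝ) ^ (α + ε))}
        = {x : E | ν (ball x (q : ℝ)) ≤ ENNReal.ofReal ((q : ℝ) ^ (α + ε))} := by
      ext x; simp [hq.1, hq.2]
    rw [heq]
    exact measurableSet_le (meas_ball_meas ν (q : ℝ)) measurable_const
  · have heq : {x : E | 0 < (q : ℝ) → (q : ℝ) ≤ δ →
        ν (ball x (q : ℝ)) ≤ ENNReal.ofReal ((q : ℝ) ^ (α + ε))} = univ := by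
      ext x; simp only [mem_setOf_eq, mem_univ, iff_true]
      intro h1 h2; exact absurd ⟨h1, h2⟩ hq
    rw [heq]; exact MeasurableSet.univ

private lemma badSet_ball_bound {E : Type*} [MetricSpace E] [MeasurableSpace E]
    (ν : Measure E) (α ε δ : ℝ) (hαε : 0 < α + ε)
    (z : E) (ρ : ℝ) (hρ : 0 < ρ) (h8 : 8 * ρ ≤ δ) :
    ν (badSet ν α ε δ ∩ ball z (2 * ρ)) ≤ ENNReal.ofReal ((8 * ρ) ^ (α + ε)) := by
  by_cases hne : (badSet ν α ε δ ∩ ball z (2 * ρ)).Nonempty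
  · obtain ⟨x, hxB, hxb⟩ := hne
    obtain ⟨q, hq4, hq8⟩ := exists_rat_btwn (show 4 * ρ < 8 * ρ by linarith)
    have hq0 : (0 : ℝ) < q := by linarith
    have hsub : badSet ν α ε δ ∩ ball z (2 * ρ) ⊆ ball x (q : ℝ) := by
      rintro y ⟨-, hy⟩
      have h1 : dist y x ≤ dist y z + dist z x := dist_triangle y z x
      have h2 : dist z x < 2 * ρ := by rw [dist_comm]; exact mem_ball.mp hxb
      have h3 : dist y z < 2 * ρ := mem_ball.mp hy
      exact mem_ball.mpr (by linarith)
    calc ν (badSet ν α ε δ ∩ ball z (2 * ρ)) ≤ ν (ball x (q : ℝ)) := measure_mono hsub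
      _ ≤ ENNReal.ofReal ((q : ℝ) ^ (α + ε)) := hxB q hq0 (by linarith)
      _ ≤ ENNReal.ofReal ((8 * ρ) ^ (α + ε)) :=
          ENNReal.ofReal_le_ofReal (Real.rpow_le_rpow hq0.le hq8.le hαε.le)
  · rw [Set.not_nonempty_iff_eq_empty] at hne
    simp [hne]


private lemma core_null {E : Type*} [MetricSpace E]
    [MeasurableSpace E] [BorelSpace E] [SecondCountableTopology E]
    {Ω : Type*} [MeasurableSpace Ω] (ℙ : Measure Ω) [IsProbabilityMeasure ℙ]
    (X : ℕ → Ω → E) (Xlim : Ω → E) (hX : ∀ n, Measurable (X n)) (hXlim : Measurable Xlim)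
    (α ε δ : ℝ) (hα : 0 < α) (hε : 0 < ε) (hδ : 0 < δ)
    (r : ℕ → ℝ) (hrpos : ∀ n, 0 < r n) (hr0 : Tendsto r atTop (𝓝 0))
    (M : ℕ) (S : Set Ω) (hSm : MeasurableSet S)
    (hSclose : ∀ ω ∈ S, ∀ n, dist (X n ω) (Xlim ω) ≤ ((M : ℝ) + 1) * r n)
    (hSmass : ∀ ω ∈ S, ∀ n,
      ENNReal.ofReal (r n ^ α / ((M : ℝ) + 1)) ≤ ℙ {ω' | dist (X n ω') (X n ω) < r n})
    (hSbad : ∀ ω ∈ S, Xlim ω ∈ badSet (ℙ.map Xlim) α ε δ) :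
    ℙ S = 0 := by
  haveI : IsProbabilityMeasure (ℙ.map Xlim) := Measure.isProbabilityMeasure_map hXlim.aemeasurable
  have hαε : 0 < α + ε := by linarith
  have key : ∀ n, 8 * (((M : ℝ) + 2) * r n) ≤ δ →
      ℙ S * ENNReal.ofReal (r n ^ α / ((M : ℝ) + 1)) ≤
        ENNReal.ofReal ((8 * (((M : ℝ) + 2) * r n)) ^ (α + ε)) := by
    intro n hn
    set c : ENNReal := ENNReal.ofReal (r n ^ α / ((M : ℝ) + 1)) with hc
    set T : Set (Ω × Ω) :=
      (S ×ˢ (univ : Set Ω)) ∩ {p : Ω × Ω | dist (X n p.2) (X n p.1) < r n} with hTdef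
    have hTm : MeasurableSet T :=
      (hSm.prod MeasurableSet.univ).inter
        (measurableSet_lt (((hX n).comp measurable_snd).dist ((hX n).comp measurable_fst))
          measurable_const)
    have h1 : ℙ S * c ≤ (ℙ.prod ℙ) T := by
      rw [Measure.prod_apply hTm]
      have hpt : ∀ ω, S.indicator (fun _ => c) ω ≤ ℙ (Prod.mk ω ⁻¹' T) := by
        intro ω
        by_cases hω : ω ∈ S
        · rw [Set.indicator_of_mem hω]
          have hset : Prod.mk ω ⁻¹' T = {ω' | dist (X n ω') (X n ω) < r n} := by
            ext ω'; simp [hTdef, hω]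
          rw [hset]
          exact hSmass ω hω n
        · rw [Set.indicator_of_notMem hω]; exact zero_le
      calc ℙ S * c = ∫⁻ ω, S.indicator (fun _ => c) ω ∂ℙ := by
            rw [lintegral_indicator_const hSm, mul_comm]
        _ ≤ ∫⁻ ω, ℙ (Prod.mk ω ⁻¹' T) ∂ℙ := lintegral_mono hpt
    have h2 : (ℙ.prod ℙ) T ≤ ENNReal.ofReal ((8 * (((M : ℝ) + 2) * r n)) ^ (α + ε)) := by
      rw [Measure.prod_apply_symm hTm]
      have hpt : ∀ ω', ℙ ((fun ω => (ω, ω')) ⁻¹' T)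
          ≤ ENNReal.ofReal ((8 * (((M : ℝ) + 2) * r n)) ^ (α + ε)) := by
        intro ω'
        have hsub : ((fun ω => (ω, ω')) ⁻¹' T) ⊆
            Xlim ⁻¹' (badSet (ℙ.map Xlim) α ε δ ∩
              ball (X n ω') (2 * (((M : ℝ) + 2) * r n))) := by
          rintro ω ⟨⟨hωS, -⟩, hd⟩
          refine ⟨hSbad ω hωS, mem_ball.mpr ?_⟩
          have h3 : dist (Xlim ω) (X n ω') ≤ dist (Xlim ω) (X n ω) + dist (X n ω) (X n ω') :=
            dist_triangle _ _ _
          have h4 : dist (Xlim ω) (X n ω) ≤ ((M : ℝ) + 1) * r n := by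
            rw [dist_comm]; exact hSclose ω hωS n
          have h5 : dist (X n ω) (X n ω') < r n := by
            rw [dist_comm]; exact hd
          have h6 : (0 : ℝ) < r n := hrpos n
          have hM0 : (0 : ℝ) ≤ (M : ℝ) := Nat.cast_nonneg M
          nlinarith
        calc ℙ ((fun ω => (ω, ω')) ⁻¹' T)
            ≤ ℙ (Xlim ⁻¹' (badSet (ℙ.map Xlim) α ε δ ∩
                ball (X n ω') (2 * (((M : ℝ) + 2) * r n)))) := measure_mono hsub
          _ = (ℙ.map Xlim) (badSet (ℙ.map Xlim) α ε δ ∩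
                ball (X n ω') (2 * (((M : ℝ) + 2) * r n))) :=
              (Measure.map_apply hXlim
                ((badSet_measurable _ _ _ _).inter measurableSet_ball)).symm
          _ ≤ ENNReal.ofReal ((8 * (((M : ℝ) + 2) * r n)) ^ (α + ε)) :=
              badSet_ball_bound _ _ _ _ hαε _ _ (by have := hrpos n; positivity) hn
      calc (∫⁻ ω', ℙ ((fun ω => (ω, ω')) ⁻¹' T) ∂ℙ)
          ≤ ∫⁻ _, ENNReal.ofReal ((8 * (((M : ℝ) + 2) * r n)) ^ (α + ε)) ∂ℙ :=
            lintegral_mono hpt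
        _ = ENNReal.ofReal ((8 * (((M : ℝ) + 2) * r n)) ^ (α + ε)) := by simp
    exact h1.trans h2
  have key2 : ∀ n, 8 * (((M : ℝ) + 2) * r n) ≤ δ →
      ℙ S ≤ ENNReal.ofReal ((8 * ((M : ℝ) + 2)) ^ (α + ε) * ((M : ℝ) + 1) * r n ^ ε) := by
    intro n hn
    have hc0 : ENNReal.ofReal (r n ^ α / ((M : ℝ) + 1)) ≠ 0 := by
      rw [ne_eq, ENNReal.ofReal_eq_zero, not_le]
      have := hrpos n
      positivity
    have hct : ENNReal.ofReal (r n ^ α / ((M : ℝ) + 1)) ≠ ⊤ := ENNReal.ofReal_ne_top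
    rw [← ENNReal.mul_le_mul_iff_left hc0 hct]
    refine (key n hn).trans_eq ?_
    have harith : (8 * (((M : ℝ) + 2) * r n)) ^ (α + ε)
        = ((8 * ((M : ℝ) + 2)) ^ (α + ε) * ((M : ℝ) + 1) * r n ^ ε)
          * (r n ^ α / ((M : ℝ) + 1)) := by
      rw [show 8 * (((M : ℝ) + 2) * r n) = (8 * ((M : ℝ) + 2)) * r n by ring,
        Real.mul_rpow (by positivity) (hrpos n).le, Real.rpow_add (hrpos n) α ε]
      have hM1 : ((M : ℝ) + 1) ≠ 0 := by positivity
      field_simp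
    rw [harith, ENNReal.ofReal_mul (by have := hrpos n; positivity)]
  have hev : ∀ᶠ n in atTop, 8 * (((M : ℝ) + 2) * r n) ≤ δ := by
    have ht : Tendsto (fun n => 8 * (((M : ℝ) + 2) * r n)) atTop (𝓝 0) := by
      have := hr0.const_mul (8 * ((M : ℝ) + 2))
      simp only [mul_zero] at this
      convert this using 2 with n
      ring
    exact (ht.eventually_lt_const hδ).mono fun n hn => hn.le
  have hlim : Tendsto
      (fun n => ENNReal.ofReal ((8 * ((M : ℝ) + 2)) ^ (α + ε) * ((M : ℝ) + 1) * r n ^ ε))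
      atTop (𝓝 0) := by
    have h1 : Tendsto (fun n => r n ^ ε) atTop (𝓝 0) := by
      have := hr0.rpow_const (p := ε) (Or.inr hε.le)
      rwa [Real.zero_rpow hε.ne'] at this
    have h2 := h1.const_mul ((8 * ((M : ℝ) + 2)) ^ (α + ε) * ((M : ℝ) + 1))
    simp only [mul_zero] at h2
    have h2' : Tendsto
        (fun n => (8 * ((M : ℝ) + 2)) ^ (α + ε) * ((M : ℝ) + 1) * r n ^ ε) atTop (𝓝 0) := by
      exact h2
    have h3 := ENNReal.tendsto_ofReal h2'
    simpa using h3
  have : ℙ S ≤ 0 := ge_of_tendsto hlim (hev.mono fun n hn => key2 n hn)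
  exact le_antisymm this zero_le


/-- **Dimension upper bound.**
Let `(X_n)` be random variables with values in a complete separable metric space `E`,
converging a.s. to `X`.  Let `ν_n` be the law of `X_n` and `ν` the law of `X`.  If there
are `α > 0`, positive random variables `C` and `D` with `D ≤ 1` a.s., and deterministic
positive radii `r_n → 0` such that a.s. `d(X_n, X) ≤ C r_n` and
`ν_n(B_{r_n}(X_n)) ≥ D r_n^α` for all `n`, then the dimension of `ν` is at most `α`: for
`ν`-a.e. `x`, `liminf_{r→0⁺} log ν(B_r(x)) / log r ≤ α`. -/
theorem dimension_upper_bound {E : Type*} [MetricSpace E] [CompleteSpace E]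
    [TopologicalSpace.SeparableSpace E] [MeasurableSpace E] [BorelSpace E]
    {Ω : Type*} [MeasurableSpace Ω] (ℙ : Measure Ω) [IsProbabilityMeasure ℙ]
    (X : ℕ → Ω → E) (Xlim : Ω → E) (hX : ∀ n, Measurable (X n))
    (hXlim : Measurable Xlim)
    (hconv : ∀ᵐ ω ∂ℙ, Tendsto (fun n => X n ω) atTop (𝓝 (Xlim ω)))
    (α : ℝ) (hα : 0 < α) (C D : Ω → ℝ)
    (hCD : ∀ᵐ ω ∂ℙ, 0 < C ω ∧ 0 < D ω ∧ D ω ≤ 1)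
    (r : ℕ → ℝ) (hrpos : ∀ n, 0 < r n) (hr0 : Tendsto r atTop (𝓝 0))
    (hclose : ∀ᵐ ω ∂ℙ, ∀ n, dist (X n ω) (Xlim ω) ≤ C ω * r n)
    (hmass : ∀ᵐ ω ∂ℙ, ∀ n,
      D ω * r n ^ α ≤ ((ℙ.map (X n)) (ball (X n ω) (r n))).toReal) :
    ∀ᵐ x ∂(ℙ.map Xlim),
      Filter.liminf (fun ρ : ℝ =>
        Real.log ((ℙ.map Xlim) (ball x ρ)).toReal / Real.log ρ) (𝓝[>] 0) ≤ α := by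
  classical
  haveI hsc : SecondCountableTopology E := UniformSpace.secondCountable_of_separable E
  haveI hνp : IsProbabilityMeasure (ℙ.map Xlim) := Measure.isProbabilityMeasure_map hXlim.aemeasurable
  haveI hXnp : ∀ n, IsProbabilityMeasure (ℙ.map (X n)) := fun n =>
    Measure.isProbabilityMeasure_map (hX n).aemeasurable
  have hmap : ∀ (n : ℕ) (y : E),
      (ℙ.map (X n)) (ball y (r n)) = ℙ {ω' | dist (X n ω') y < r n} := by
    intro n y
    rw [Measure.map_apply (hX n) measurableSet_ball]
    rfl
  set A : ℕ → Set Ω := fun M => {ω | ∀ n, dist (X n ω) (Xlim ω) ≤ ((M : ℝ) + 1) * r n ∧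
    ENNReal.ofReal (r n ^ α / ((M : ℝ) + 1)) ≤ ℙ {ω' | dist (X n ω') (X n ω) < r n}} with hA
  have hAmeas : ∀ M, MeasurableSet (A M) := by
    intro M
    have heq : A M = ⋂ n, ({ω | dist (X n ω) (Xlim ω) ≤ ((M : ℝ) + 1) * r n} ∩
        {ω | ENNReal.ofReal (r n ^ α / ((M : ℝ) + 1)) ≤
          ℙ {ω' | dist (X n ω') (X n ω) < r n}}) := by
      ext ω
      simp only [hA, Set.mem_setOf_eq, Set.mem_iInter, Set.mem_inter_iff]
    rw [heq]
    refine MeasurableSet.iInter fun n => MeasurableSet.inter ?_ ?_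
    · exact measurableSet_le ((hX n).dist hXlim) measurable_const
    · have hg : Measurable fun ω => ℙ {ω' | dist (X n ω') (X n ω) < r n} := by
        have heq2 : (fun ω => ℙ {ω' | dist (X n ω') (X n ω) < r n})
            = fun ω => (ℙ.map (X n)) (ball (X n ω) (r n)) := by
          funext ω; rw [hmap]
        rw [heq2]
        exact (meas_ball_meas (ℙ.map (X n)) (r n)).comp (hX n)
      exact measurableSet_le measurable_const hg
  have hAfull : ∀ᵐ ω ∂ℙ, ω ∈ ⋃ M, A M := by
    filter_upwards [hCD, hclose, hmass] with ω hcd hcl hm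
    obtain ⟨hC, hD, hD1⟩ := hcd
    obtain ⟨M, hM⟩ := exists_nat_ge (max (C ω) (1 / D ω))
    refine Set.mem_iUnion.mpr ⟨M, ?_⟩
    simp only [hA, Set.mem_setOf_eq]
    intro n
    constructor
    · calc dist (X n ω) (Xlim ω) ≤ C ω * r n := hcl n
        _ ≤ ((M : ℝ) + 1) * r n := by
            apply mul_le_mul_of_nonneg_right _ (hrpos n).le
            have h1 := le_max_left (C ω) (1 / D ω)
            linarith
    · rw [← hmap n (X n ω)]
      apply ENNReal.ofReal_le_of_le_toReal
      refine le_trans ?_ (hm n)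
      have h2 : 1 ≤ D ω * ((M : ℝ) + 1) := by
        have h3 : 1 / D ω ≤ (M : ℝ) + 1 := le_trans (le_max_right _ _) (by linarith)
        rw [div_le_iff₀ hD] at h3
        nlinarith
      rw [div_le_iff₀ (by positivity)]
      have hr : (0:ℝ) ≤ r n ^ α := Real.rpow_nonneg (hrpos n).le α
      nlinarith
  have hBadnull : ∀ ε δ : ℝ, 0 < ε → 0 < δ →
      (ℙ.map Xlim) (badSet (ℙ.map Xlim) α ε δ) = 0 := by
    intro ε δ hε hδ
    have hcore : ∀ M : ℕ, ℙ (A M ∩ Xlim ⁻¹' badSet (ℙ.map Xlim) α ε δ) = 0 := by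
      intro M
      refine core_null ℙ X Xlim hX hXlim α ε δ hα hε hδ r hrpos hr0 M _
        ((hAmeas M).inter ((badSet_measurable _ _ _ _).preimage hXlim)) ?_ ?_ ?_
      · intro ω hω n; exact (hω.1 n).1
      · intro ω hω n; exact (hω.1 n).2
      · intro ω hω; exact hω.2
    rw [Measure.map_apply hXlim (badSet_measurable _ _ _ _)]
    have hsub : Xlim ⁻¹' badSet (ℙ.map Xlim) α ε δ ⊆
        ((⋃ M, A M)ᶜ) ∪ ⋃ M, (A M ∩ Xlim ⁻¹' badSet (ℙ.map Xlim) α ε δ) := by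
      intro ω hω
      by_cases h : ω ∈ ⋃ M, A M
      · obtain ⟨M, hM⟩ := Set.mem_iUnion.mp h
        exact Or.inr (Set.mem_iUnion.mpr ⟨M, hM, hω⟩)
      · exact Or.inl h
    refine le_antisymm (le_trans (measure_mono hsub) ?_) zero_le
    refine le_trans (measure_union_le _ _) ?_
    have h1 : ℙ ((⋃ M, A M)ᶜ) = 0 := by
      have h2 := hAfull
      rw [ae_iff] at h2
      exact h2
    have h2 : ℙ (⋃ M, (A M ∩ Xlim ⁻¹' badSet (ℙ.map Xlim) α ε δ)) = 0 :=
      measure_iUnion_null hcore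
    rw [h1, h2]
    simp
  have hae : ∀ᵐ x ∂(ℙ.map Xlim), ∀ j k : ℕ,
      x ∉ badSet (ℙ.map Xlim) α (1 / ((k : ℝ) + 1)) (1 / ((j : ℝ) + 1)) := by
    rw [ae_all_iff]
    intro j
    rw [ae_all_iff]
    intro k
    exact measure_eq_zero_iff_ae_notMem.mp (hBadnull _ _ (by positivity) (by positivity))
  filter_upwards [hae] with x hx
  have hf0 : ∀ᶠ ρ in 𝓝[>] (0:ℝ),
      0 ≤ Real.log ((ℙ.map Xlim) (ball x ρ)).toReal / Real.log ρ := by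
    filter_upwards [Ioo_mem_nhdsGT_of_mem (show (0:ℝ) ∈ Ico (0:ℝ) 1 by simp)] with ρ hρ
    have h1 : Real.log ρ < 0 := Real.log_neg hρ.1 hρ.2
    have h2 : Real.log ((ℙ.map Xlim) (ball x ρ)).toReal ≤ 0 := by
      apply Real.log_nonpos ENNReal.toReal_nonneg
      have h3 : (ℙ.map Xlim) (ball x ρ) ≤ 1 := prob_le_one
      calc ((ℙ.map Xlim) (ball x ρ)).toReal ≤ (1 : ENNReal).toReal :=
          ENNReal.toReal_mono ENNReal.one_ne_top h3
        _ = 1 := by simp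
    rw [div_nonneg_iff]
    exact Or.inr ⟨h2, h1.le⟩
  have hbdd : IsBoundedUnder (· ≥ ·) (𝓝[>] (0:ℝ))
      (fun ρ => Real.log ((ℙ.map Xlim) (ball x ρ)).toReal / Real.log ρ) :=
    ⟨0, by simpa [eventually_map] using hf0⟩
  have hmain : ∀ k : ℕ, Filter.liminf (fun ρ : ℝ =>
      Real.log ((ℙ.map Xlim) (ball x ρ)).toReal / Real.log ρ) (𝓝[>] 0)
        ≤ α + 1 / ((k:ℝ) + 1) := by
    intro k
    refine Filter.liminf_le_of_frequently_le ?_ hbdd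
    rw [Filter.frequently_iff]
    intro U hU
    rw [mem_nhdsGT_iff_exists_Ioc_subset] at hU
    obtain ⟨u, hu, hsubU⟩ := hU
    have hu0 : (0:ℝ) < u := hu
    obtain ⟨j, hj⟩ := exists_nat_one_div_lt (lt_min hu0 one_pos)
    have hx' := hx j k
    simp only [badSet, Set.mem_setOf_eq] at hx'
    push_neg at hx'
    obtain ⟨q, hq0, hqle, hqgt⟩ := hx'
    have hqu : (q : ℝ) < min u 1 := lt_of_le_of_lt hqle hj
    refine ⟨(q : ℝ), hsubU ⟨hq0, le_of_lt (lt_of_lt_of_le hqu (min_le_left _ _))⟩, ?_⟩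
    have hq1 : (q : ℝ) < 1 := lt_of_lt_of_le hqu (min_le_right _ _)
    have htop : (ℙ.map Xlim) (ball x (q:ℝ)) ≠ ⊤ := measure_ne_top _ _
    have hm : (q:ℝ) ^ (α + 1 / ((k:ℝ) + 1)) < ((ℙ.map Xlim) (ball x (q:ℝ))).toReal :=
      (ENNReal.ofReal_lt_iff_lt_toReal (by positivity) htop).mp hqgt
    have hlogq : Real.log (q:ℝ) < 0 := Real.log_neg hq0 hq1
    show Real.log ((ℙ.map Xlim) (ball x (q:ℝ))).toReal / Real.log (q:ℝ)
      ≤ α + 1 / ((k:ℝ) + 1)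
    rw [div_le_iff_of_neg hlogq]
    calc (α + 1 / ((k:ℝ) + 1)) * Real.log (q:ℝ)
        = Real.log ((q:ℝ) ^ (α + 1 / ((k:ℝ) + 1))) := (Real.log_rpow hq0 _).symm
      _ ≤ Real.log ((ℙ.map Xlim) (ball x (q:ℝ))).toReal :=
        Real.log_le_log (by positivity) hm.le
  refine _root_.le_of_forall_pos_le_add fun t ht => ?_
  obtain ⟨k, hk⟩ := exists_nat_one_div_lt ht
  exact (hmain k).trans (by linarith)
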